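/- Fix H ∈ (0,1). For all s,t > 0 with s ≠ t, with Θ_{s,t} := s^{2H} t^{2H} − R(s,t)² and A(s,t) := (1/4)(2s^{2H} + 2t^{2H} − |t−s|^{2H} − (t^{2H} − s^{2H})²/|t−s|^{2H}), the following hold: (i) Θ_{s,t} = |t−s|^{2H} A(s,t); (ii) (s^{2H} ∧ t^{2H})/|A(s,t)| ≤ 2^{2−2H}/(4 − 2^{2H}); (iii) there is a constant C_H depending only on H such that 1/Θ²_{s,t} ≤ C_H / (|t−s|^{4H} (s^{4H} ∧ t^{4H})). -/

import Mathlib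

open Real Set

noncomputable section

/-- Fractional Brownian motion covariance `R(s,t) = (t^{2H} + s^{2H} - |t-s|^{2H})/2`. -/
def fbmR (H s t : ℝ) : ℝ := (t ^ (2*H) + s ^ (2*H) - |t - s| ^ (2*H)) / 2

/-- `Θ_{s,t} = s^{2H} t^{2H} − R(s,t)²`. -/
def fbmTheta (H s t : ℝ) : ℝ := s ^ (2*H) * t ^ (2*H) - (fbmR H s t)^2

/-- `A(s,t) = (1/4)(2s^{2H} + 2t^{2H} − |t−s|^{2H} − (t^{2H} − s^{2H})²/|t−s|^{2H})`. -/
def fbmA (H s t : ℝ) : ℝ :=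
  (2 * s ^ (2*H) + 2 * t ^ (2*H) - |t - s| ^ (2*H)
    - (t ^ (2*H) - s ^ (2*H))^2 / |t - s| ^ (2*H)) / 4

end

/-! ### Auxiliary elementary inequalities -/

private lemma st7_bern {r x : ℝ} (hr0 : 0 ≤ r) (hr1 : r ≤ 1) (hx : 0 ≤ x) :
    (1 + x) ^ r ≤ 1 + r * x := by
  have h := Real.geom_mean_le_arith_mean2_weighted hr0 (by linarith : (0:ℝ) ≤ 1 - r)
    (by linarith : (0:ℝ) ≤ 1 + x) zero_le_one (by ring)
  rw [Real.one_rpow, mul_one] at h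
  linarith

private lemma st7_amgm {w y : ℝ} (hw0 : 0 ≤ w) (hw1 : w ≤ 1) (hy : 0 ≤ y) :
    y ^ w ≤ w * y + (1 - w) := by
  have h := Real.geom_mean_le_arith_mean2_weighted hw0 (by linarith : (0:ℝ) ≤ 1 - w)
    hy zero_le_one (by ring)
  rw [Real.one_rpow, mul_one] at h
  linarith

private lemma st7_L2b {ν y : ℝ} (hν0 : 0 < ν) (hν1 : ν ≤ 1) (hy : 1 ≤ y) :
    2 - ν ≤ y ^ (1 - ν) + (1 - ν) * y ^ (-ν) := by
  have hy0 : (0:ℝ) < y := lt_of_lt_of_le one_pos hy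
  have h1 : y ^ ν ≤ ν * y + (1 - ν) := st7_amgm hν0.le hν1 hy0.le
  have h2 : (2 - ν) * y ^ ν ≤ y + (1 - ν) := by
    nlinarith [mul_nonneg (sq_nonneg (1 - ν)) (sub_nonneg.2 hy)]
  have e0 : y ^ ν * y ^ (-ν) = 1 := by
    rw [← Real.rpow_add hy0]; simp
  have e1 : y * y ^ (-ν) = y ^ (1 - ν) := by
    nth_rewrite 1 [← Real.rpow_one y]
    rw [← Real.rpow_add hy0]; congr 1 <;> ring
  have hpos : (0:ℝ) < y ^ (-ν) := Real.rpow_pos_of_pos hy0 _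
  have h3 := mul_le_mul_of_nonneg_right h2 hpos.le
  calc 2 - ν = (2 - ν) * (y ^ ν * y ^ (-ν)) := by rw [e0]; ring
    _ = (2 - ν) * y ^ ν * y ^ (-ν) := by ring
    _ ≤ (y + (1 - ν)) * y ^ (-ν) := h3
    _ = y * y ^ (-ν) + (1 - ν) * y ^ (-ν) := by ring
    _ = y ^ (1 - ν) + (1 - ν) * y ^ (-ν) := by rw [e1]

private lemma st7_split {r y : ℝ} (hr0 : 0 ≤ r) (hr1 : r ≤ 1) (hy0 : 0 < y) :
    (1 + y) ^ r ≤ y ^ r + r * y ^ (r - 1) := by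
  have e : (1:ℝ) + y = y * (1 + 1 / y) := by field_simp; ring
  rw [e, Real.mul_rpow hy0.le (by positivity)]
  have hb := st7_bern hr0 hr1 (by positivity : (0:ℝ) ≤ 1 / y)
  have hyr : (0:ℝ) < y ^ r := Real.rpow_pos_of_pos hy0 _
  have h2 : y ^ r * (1 + 1 / y) ^ r ≤ y ^ r * (1 + r * (1 / y)) :=
    mul_le_mul_of_nonneg_left hb hyr.le
  refine h2.trans (le_of_eq ?_)
  have e2 : y ^ (r - 1) * y = y ^ r := by
    rw [← Real.rpow_add_one hy0.ne']; congr 1; ring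
  field_simp
  nlinarith [e2]

private lemma st7_L2 {ν y : ℝ} (hν0 : 0 < ν) (hν1 : ν ≤ 1) (hy : 1 ≤ y) :
    (y ^ ν - 1) * (1 + y) ^ (1 - ν) ≤ y - 1 := by
  have hy0 : (0:ℝ) < y := lt_of_lt_of_le one_pos hy
  have hB : (1 + y) ^ (1 - ν) ≤ y ^ (1 - ν) + (1 - ν) * y ^ (-ν) := by
    have h := st7_split (r := 1 - ν) (by linarith) (by linarith) hy0
    rw [show (1 - ν) - 1 = -ν from by ring] at h
    exact h
  have hyν : 1 ≤ y ^ ν := by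
    rw [← Real.one_rpow ν]; exact Real.rpow_le_rpow zero_le_one hy hν0.le
  have step := mul_le_mul_of_nonneg_left hB (by linarith : (0:ℝ) ≤ y ^ ν - 1)
  have eA : y ^ ν * y ^ (1 - ν) = y := by
    rw [← Real.rpow_add hy0]; norm_num
  have eB : y ^ ν * y ^ (-ν) = 1 := by rw [← Real.rpow_add hy0]; simp
  have hb2 := st7_L2b hν0 hν1 hy
  calc (y ^ ν - 1) * (1 + y) ^ (1 - ν)
      ≤ (y ^ ν - 1) * (y ^ (1 - ν) + (1 - ν) * y ^ (-ν)) := step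
    _ = y ^ ν * y ^ (1 - ν) + (1 - ν) * (y ^ ν * y ^ (-ν))
        - (y ^ (1 - ν) + (1 - ν) * y ^ (-ν)) := by ring
    _ = y + (1 - ν) - (y ^ (1 - ν) + (1 - ν) * y ^ (-ν)) := by rw [eA, eB]; ring
    _ ≤ y + (1 - ν) - (2 - ν) := by linarith
    _ = y - 1 := by ring

private lemma st7_L2' {ν y : ℝ} (hν0 : 0 < ν) (hν1 : ν ≤ 1) (hy : 1 ≤ y) :
    y ^ ν - 1 ≤ (y - 1) * (1 + y) ^ (ν - 1) := by
  have h1y : (0:ℝ) < 1 + y := by linarith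
  have key := st7_L2 hν0 hν1 hy
  have hpos : (0:ℝ) < (1 + y) ^ (ν - 1) := Real.rpow_pos_of_pos h1y _
  have e : (1 + y) ^ (1 - ν) * (1 + y) ^ (ν - 1) = 1 := by
    rw [← Real.rpow_add h1y]; norm_num
  have h4 := mul_le_mul_of_nonneg_right key hpos.le
  rw [mul_assoc, e, mul_one] at h4
  linarith

private lemma st7_L3 {ν y : ℝ} (hν1 : 1 ≤ ν) (hν2 : ν ≤ 2) (hy : 1 ≤ y) :
    (y - 1) * (1 + y) ^ (ν - 1) ≤ y ^ ν - 1 := by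
  have hy0 : (0:ℝ) < y := lt_of_lt_of_le one_pos hy
  set r : ℝ := ν - 1 with hr
  have hr0 : 0 ≤ r := by rw [hr]; linarith
  have hr1 : r ≤ 1 := by rw [hr]; linarith
  have hB := st7_split hr0 hr1 hy0
  have step := mul_le_mul_of_nonneg_left hB (by linarith : (0:ℝ) ≤ y - 1)
  have eA : y * y ^ r = y ^ ν := by
    nth_rewrite 1 [← Real.rpow_one y]
    rw [← Real.rpow_add hy0]; congr 1; rw [hr]; ring
  have eB : y * y ^ (r - 1) = y ^ r := by
    nth_rewrite 1 [← Real.rpow_one y]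
    rw [← Real.rpow_add hy0]; congr 1; ring
  have hg : 1 ≤ (1 - r) * y ^ r + r * y ^ (r - 1) := by
    have g := Real.geom_mean_le_arith_mean2_weighted (by linarith : (0:ℝ) ≤ 1 - r) hr0
      (Real.rpow_pos_of_pos hy0 r).le (Real.rpow_pos_of_pos hy0 (r - 1)).le (by ring)
    have e1 : (y ^ r) ^ (1 - r) * (y ^ (r - 1)) ^ r = 1 := by
      rw [← Real.rpow_mul hy0.le, ← Real.rpow_mul hy0.le, ← Real.rpow_add hy0,
        show r * (1 - r) + (r - 1) * r = 0 from by ring, Real.rpow_zero]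
    calc (1:ℝ) = (y ^ r) ^ (1 - r) * (y ^ (r - 1)) ^ r := e1.symm
      _ ≤ (1 - r) * y ^ r + r * y ^ (r - 1) := g
  calc (y - 1) * (1 + y) ^ r ≤ (y - 1) * (y ^ r + r * y ^ (r - 1)) := step
    _ = y * y ^ r + r * (y * y ^ (r - 1)) - y ^ r - r * y ^ (r - 1) := by ring
    _ = y ^ ν + r * y ^ r - y ^ r - r * y ^ (r - 1) := by rw [eA, eB]
    _ = y ^ ν - ((1 - r) * y ^ r + r * y ^ (r - 1)) := by ring
    _ ≤ y ^ ν - 1 := by linarith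

/-! ### The sharp subadditivity defect inequalities, via a monotonicity argument -/

section core
variable (ν : ℝ)

private noncomputable def st7_f (y : ℝ) : ℝ :=
  (1 + y) ^ ν * y ^ (-(ν/2)) - y ^ (ν/2) - y ^ (-(ν/2)) + (2 - (2:ℝ) ^ ν)

private noncomputable def st7_f' (y : ℝ) : ℝ :=
  ν * (1 + y) ^ (ν - 1) * y ^ (-(ν/2)) + (1 + y) ^ ν * (-(ν/2) * y ^ (-(ν/2) - 1))
    - ν/2 * y ^ (ν/2 - 1) - (-(ν/2) * y ^ (-(ν/2) - 1))

private lemma st7_hasDeriv {y : ℝ} (hy0 : 0 < y) :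
    HasDerivAt (st7_f ν) (st7_f' ν y) y := by
  have h1 : HasDerivAt (fun y : ℝ => (1 + y) ^ ν) (ν * (1 + y) ^ (ν - 1)) y := by
    have hb : HasDerivAt (fun y : ℝ => 1 + y) 1 y := (hasDerivAt_id y).const_add 1
    have := hb.rpow_const (p := ν) (Or.inl (by positivity))
    simpa using this
  have h2 : HasDerivAt (fun y : ℝ => y ^ (-(ν/2))) (-(ν/2) * y ^ (-(ν/2) - 1)) y :=
    Real.hasDerivAt_rpow_const (Or.inl hy0.ne')
  have h3 : HasDerivAt (fun y : ℝ => y ^ (ν/2)) (ν/2 * y ^ (ν/2 - 1)) y :=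
    Real.hasDerivAt_rpow_const (Or.inl hy0.ne')
  exact (((h1.mul h2).sub h3).sub h2).add_const _

private lemma st7_f'_eq {y : ℝ} (hy0 : 0 < y) :
    st7_f' ν y = y ^ (-(ν/2) - 1) * (ν/2) *
      ((y - 1) * (1 + y) ^ (ν - 1) + 1 - y ^ ν) := by
  have h1y : (0:ℝ) < 1 + y := by linarith
  have eA : y ^ (-(ν/2)) = y ^ (-(ν/2) - 1) * y := by
    rw [← Real.rpow_add_one hy0.ne']; congr 1; ring
  have eB : y ^ (ν/2 - 1) = y ^ (-(ν/2) - 1) * y ^ ν := by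
    rw [← Real.rpow_add hy0]; congr 1; ring
  have eC : (1 + y) ^ ν = (1 + y) ^ (ν - 1) * (1 + y) := by
    rw [← Real.rpow_add_one h1y.ne']; congr 1; ring
  unfold st7_f'
  rw [eA, eB, eC]
  ring

private lemma st7_coreB {y : ℝ} (hν0 : 0 < ν) (hν1 : ν ≤ 1) (hy : 1 ≤ y) :
    0 ≤ st7_f ν y := by
  have hmono : MonotoneOn (st7_f ν) (Set.Ici 1) := by
    apply monotoneOn_of_deriv_nonneg (convex_Ici 1)
    · intro z hz
      have hz0 : (0:ℝ) < z := lt_of_lt_of_le one_pos hz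
      exact (st7_hasDeriv ν hz0).continuousAt.continuousWithinAt
    · intro z hz
      rw [interior_Ici] at hz
      have hz0 : (0:ℝ) < z := lt_trans one_pos hz
      exact (st7_hasDeriv ν hz0).differentiableAt.differentiableWithinAt
    · intro z hz
      rw [interior_Ici] at hz
      have hz0 : (0:ℝ) < z := lt_trans one_pos hz
      rw [(st7_hasDeriv ν hz0).deriv, st7_f'_eq ν hz0]
      have hL := st7_L2' hν0 hν1 hz.le
      have hE : (0:ℝ) ≤ z ^ (-(ν/2) - 1) := (Real.rpow_pos_of_pos hz0 _).le
      have h0 : (0:ℝ) ≤ (z - 1) * (1 + z) ^ (ν - 1) + 1 - z ^ ν := by linarith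
      positivity
  have hf1 : st7_f ν 1 = 0 := by
    unfold st7_f
    rw [Real.one_rpow, Real.one_rpow, show (1:ℝ) + 1 = 2 from by norm_num]
    ring
  have := hmono (Set.mem_Ici.2 (le_refl 1)) (Set.mem_Ici.2 hy) hy
  rw [hf1] at this
  exact this

private lemma st7_coreB' {y : ℝ} (hν1 : 1 ≤ ν) (hν2 : ν ≤ 2) (hy : 1 ≤ y) :
    st7_f ν y ≤ 0 := by
  have hanti : AntitoneOn (st7_f ν) (Set.Ici 1) := by
    apply antitoneOn_of_deriv_nonpos (convex_Ici 1)
    · intro z hz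
      have hz0 : (0:ℝ) < z := lt_of_lt_of_le one_pos hz
      exact (st7_hasDeriv ν hz0).continuousAt.continuousWithinAt
    · intro z hz
      rw [interior_Ici] at hz
      have hz0 : (0:ℝ) < z := lt_trans one_pos hz
      exact (st7_hasDeriv ν hz0).differentiableAt.differentiableWithinAt
    · intro z hz
      rw [interior_Ici] at hz
      have hz0 : (0:ℝ) < z := lt_trans one_pos hz
      rw [(st7_hasDeriv ν hz0).deriv, st7_f'_eq ν hz0]
      have hL := st7_L3 hν1 hν2 hz.le
      have hE : (0:ℝ) ≤ z ^ (-(ν/2) - 1) := (Real.rpow_pos_of_pos hz0 _).le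
      have h0 : (z - 1) * (1 + z) ^ (ν - 1) + 1 - z ^ ν ≤ 0 := by linarith
      have hν0 : (0:ℝ) ≤ ν/2 := by linarith
      nlinarith [mul_nonneg hE hν0]
  have hf1 : st7_f ν 1 = 0 := by
    unfold st7_f
    rw [Real.one_rpow, Real.one_rpow, show (1:ℝ) + 1 = 2 from by norm_num]
    ring
  have := hanti (Set.mem_Ici.2 (le_refl 1)) (Set.mem_Ici.2 hy) hy
  rw [hf1] at this
  exact this

end core

private lemma st7_half_sq {x : ℝ} (hx : 0 < x) (ν : ℝ) : x ^ (ν/2) * x ^ (ν/2) = x ^ ν := by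
  rw [← Real.rpow_add hx]; congr 1; ring

private lemma st7_conv {ν u v : ℝ} (hu : 0 < u) (hv : 0 < v) (hvu : v ≤ u) :
    ((1 + u/v) ^ ν * (u/v) ^ (-(ν/2)) - (u/v) ^ (ν/2) - (u/v) ^ (-(ν/2)) + (2 - (2:ℝ) ^ ν))
      * (u ^ (ν/2) * v ^ (ν/2))
    = (u + v) ^ ν - u ^ ν - v ^ ν + (2 - (2:ℝ) ^ ν) * (u ^ (ν/2) * v ^ (ν/2)) := by
  have hU : (0:ℝ) < u ^ (ν/2) := Real.rpow_pos_of_pos hu _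
  have hV : (0:ℝ) < v ^ (ν/2) := Real.rpow_pos_of_pos hv _
  have e1 : (u/v) ^ (ν/2) = u ^ (ν/2) / v ^ (ν/2) := Real.div_rpow hu.le hv.le _
  have e2 : (u/v) ^ (-(ν/2)) = v ^ (ν/2) / u ^ (ν/2) := by
    rw [Real.rpow_neg (div_nonneg hu.le hv.le), e1, inv_div]
  have e3 : (1 + u/v) ^ ν = (u + v) ^ ν / (v ^ (ν/2) * v ^ (ν/2)) := by
    rw [show 1 + u/v = (u + v)/v from by field_simp; ring,
      Real.div_rpow (by positivity) hv.le, st7_half_sq hv]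
  rw [e1, e2, e3, ← st7_half_sq hu ν, ← st7_half_sq hv ν]
  field_simp

private lemma st7_claimB {ν : ℝ} (hν0 : 0 < ν) (hν1 : ν ≤ 1) {u v : ℝ}
    (hu : 0 < u) (hv : 0 < v) :
    u ^ ν + v ^ ν ≤ (u + v) ^ ν + (2 - (2:ℝ) ^ ν) * (u ^ (ν/2) * v ^ (ν/2)) := by
  rcases le_total v u with h | h
  · have hy : 1 ≤ u / v := (one_le_div hv).2 h
    have hcore := st7_coreB ν hν0 hν1 hy
    unfold st7_f at hcore
    have hg : (0:ℝ) ≤ u ^ (ν/2) * v ^ (ν/2) := by positivity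
    have := mul_nonneg hcore hg
    rw [st7_conv hu hv h] at this
    linarith
  · have hy : 1 ≤ v / u := (one_le_div hu).2 h
    have hcore := st7_coreB ν hν0 hν1 hy
    unfold st7_f at hcore
    have hg : (0:ℝ) ≤ v ^ (ν/2) * u ^ (ν/2) := by positivity
    have := mul_nonneg hcore hg
    rw [st7_conv hv hu h] at this
    have e : v + u = u + v := by ring
    rw [e] at this
    linarith

private lemma st7_claimB' {ν : ℝ} (hν1 : 1 ≤ ν) (hν2 : ν ≤ 2) {u v : ℝ}
    (hu : 0 < u) (hv : 0 < v) :
    (u + v) ^ ν ≤ u ^ ν + v ^ ν + ((2:ℝ) ^ ν - 2) * (u ^ (ν/2) * v ^ (ν/2)) := by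
  rcases le_total v u with h | h
  · have hy : 1 ≤ u / v := (one_le_div hv).2 h
    have hcore := st7_coreB' ν hν1 hν2 hy
    unfold st7_f at hcore
    have hg : (0:ℝ) ≤ u ^ (ν/2) * v ^ (ν/2) := by positivity
    have := mul_nonpos_of_nonpos_of_nonneg hcore hg
    rw [st7_conv hu hv h] at this
    linarith
  · have hy : 1 ≤ v / u := (one_le_div hu).2 h
    have hcore := st7_coreB' ν hν1 hν2 hy
    unfold st7_f at hcore
    have hg : (0:ℝ) ≤ v ^ (ν/2) * u ^ (ν/2) := by positivity
    have := mul_nonpos_of_nonpos_of_nonneg hcore hg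
    rw [st7_conv hv hu h] at this
    have e : v + u = u + v := by ring
    rw [e] at this
    linarith

private lemma st7_E1 {ν : ℝ} (hν0 : 0 < ν) (hν1 : ν ≤ 1) {s d : ℝ} (hs : 0 < s) (hd : 0 < d) :
    (s + d) ^ ν ≤ s ^ ν + d ^ ν := by
  have h1 : (s + d) ^ (ν - 1) ≤ s ^ (ν - 1) :=
    Real.rpow_le_rpow_of_nonpos hs (by linarith) (by linarith)
  have h2 : (s + d) ^ (ν - 1) ≤ d ^ (ν - 1) :=
    Real.rpow_le_rpow_of_nonpos hd (by linarith) (by linarith)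
  have es : s ^ (ν - 1) * s = s ^ ν := by
    rw [← Real.rpow_add_one hs.ne']; congr 1; ring
  have ed : d ^ (ν - 1) * d = d ^ ν := by
    rw [← Real.rpow_add_one hd.ne']; congr 1; ring
  have e : (s + d) ^ ν = (s + d) ^ (ν - 1) * s + (s + d) ^ (ν - 1) * d := by
    rw [← mul_add, ← Real.rpow_add_one (by positivity : (s + d) ≠ 0)]
    congr 1; ring
  rw [e, ← es, ← ed]
  have := mul_le_mul_of_nonneg_right h1 hs.le
  have := mul_le_mul_of_nonneg_right h2 hd.le
  linarith

private lemma st7_E2 {ν : ℝ} (hν1 : 1 ≤ ν) {s d : ℝ} (hs : 0 < s) (hd : 0 < d) :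
    s ^ ν + d ^ ν ≤ (s + d) ^ ν := by
  have h1 : s ^ (ν - 1) ≤ (s + d) ^ (ν - 1) :=
    Real.rpow_le_rpow hs.le (by linarith) (by linarith)
  have h2 : d ^ (ν - 1) ≤ (s + d) ^ (ν - 1) :=
    Real.rpow_le_rpow hd.le (by linarith) (by linarith)
  have es : s ^ (ν - 1) * s = s ^ ν := by
    rw [← Real.rpow_add_one hs.ne']; congr 1; ring
  have ed : d ^ (ν - 1) * d = d ^ ν := by
    rw [← Real.rpow_add_one hd.ne']; congr 1; ring
  have e : (s + d) ^ ν = (s + d) ^ (ν - 1) * s + (s + d) ^ (ν - 1) * d := by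
    rw [← mul_add, ← Real.rpow_add_one (by positivity : (s + d) ≠ 0)]
    congr 1; ring
  rw [e, ← es, ← ed]
  have := mul_le_mul_of_nonneg_right h1 hs.le
  have := mul_le_mul_of_nonneg_right h2 hd.le
  linarith

private lemma st7_keysq {ν : ℝ} (hν0 : 0 < ν) (hν2 : ν < 2) {s d : ℝ} (hs : 0 < s) (hd : 0 < d) :
    (s ^ ν + d ^ ν - (s + d) ^ ν) ^ 2 ≤ (2 - (2:ℝ) ^ ν) ^ 2 * (s ^ ν * d ^ ν) := by
  have hg : (s ^ (ν/2) * d ^ (ν/2)) ^ 2 = s ^ ν * d ^ ν := by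
    rw [mul_pow, sq, sq, st7_half_sq hs, st7_half_sq hd]
  rcases le_or_gt ν 1 with hν1 | hν1
  · have hXnn : 0 ≤ s ^ ν + d ^ ν - (s + d) ^ ν := by linarith [st7_E1 hν0 hν1 hs hd]
    have hXub : s ^ ν + d ^ ν - (s + d) ^ ν ≤ (2 - (2:ℝ) ^ ν) * (s ^ (ν/2) * d ^ (ν/2)) := by
      linarith [st7_claimB hν0 hν1 hs hd]
    nlinarith [mul_self_le_mul_self hXnn hXub]
  · have hXnn : 0 ≤ (s + d) ^ ν - s ^ ν - d ^ ν := by linarith [st7_E2 hν1.le hs hd]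
    have hXub : (s + d) ^ ν - s ^ ν - d ^ ν ≤ ((2:ℝ) ^ ν - 2) * (s ^ (ν/2) * d ^ (ν/2)) := by
      linarith [st7_claimB' hν1.le hν2.le hs hd]
    nlinarith [mul_self_le_mul_self hXnn hXub]

/-! ### Consequences for `fbmTheta` and `fbmA` -/

private lemma st7_two_rpow_two : (2:ℝ) ^ (2:ℝ) = 4 := by
  have h : (2:ℝ) ^ ((2:ℕ):ℝ) = (2:ℝ) ^ (2:ℕ) := Real.rpow_natCast 2 2
  rw [show ((2:ℕ):ℝ) = (2:ℝ) from by norm_num] at h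
  rw [h]; norm_num

private lemma st7_B_lt_four {H : ℝ} (hH : H ∈ Set.Ioo (0:ℝ) 1) : (2:ℝ) ^ (2*H) < 4 := by
  have := Real.rpow_lt_rpow_of_exponent_lt (x := 2) one_lt_two (y := 2*H) (z := 2)
    (by linarith [hH.2])
  rwa [st7_two_rpow_two] at this

private lemma st7_one_lt_B {H : ℝ} (hH : H ∈ Set.Ioo (0:ℝ) 1) : 1 < (2:ℝ) ^ (2*H) := by
  have := Real.rpow_lt_rpow_of_exponent_lt (x := 2) one_lt_two (y := 0) (z := 2*H)
    (by linarith [hH.1])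
  rwa [Real.rpow_zero] at this

private lemma st7_part_i (H : ℝ) {s t : ℝ} (hst : s ≠ t) :
    fbmTheta H s t = |t - s| ^ (2*H) * fbmA H s t := by
  have habs : (0:ℝ) < |t - s| := abs_pos.2 (sub_ne_zero.2 (Ne.symm hst))
  have hc : (0:ℝ) < |t - s| ^ (2*H) := Real.rpow_pos_of_pos habs _
  unfold fbmTheta fbmR fbmA
  field_simp
  ring

private lemma st7_theta_lb {H : ℝ} (hH : H ∈ Set.Ioo (0:ℝ) 1) {s t : ℝ}
    (hs : 0 < s) (hst : s < t) :
    (2:ℝ) ^ (2*H) * (4 - (2:ℝ) ^ (2*H)) / 4 * (s ^ (2*H) * (t - s) ^ (2*H))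
      ≤ fbmTheta H s t := by
  have hd : (0:ℝ) < t - s := by linarith
  have hν0 : (0:ℝ) < 2*H := by linarith [hH.1]
  have hν2 : 2*H < 2 := by linarith [hH.2]
  have key := st7_keysq hν0 hν2 hs hd
  rw [show s + (t - s) = t from by ring] at key
  have habs : |t - s| = t - s := abs_of_pos hd
  unfold fbmTheta fbmR
  rw [habs]
  nlinarith [key, Real.rpow_pos_of_pos hs (2*H), Real.rpow_pos_of_pos hd (2*H),
    Real.rpow_pos_of_pos (lt_trans hs hst) (2*H)]

private lemma st7_bound_ii {H : ℝ} (hH : H ∈ Set.Ioo (0:ℝ) 1) {s t : ℝ}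
    (hs : 0 < s) (hst : s < t) :
    min (s ^ (2*H)) (t ^ (2*H)) / |fbmA H s t| ≤ (2:ℝ) ^ (2-2*H) / (4 - (2:ℝ) ^ (2*H)) := by
  have hd : (0:ℝ) < t - s := by linarith
  have habs : |t - s| = t - s := abs_of_pos hd
  have hc : (0:ℝ) < (t - s) ^ (2*H) := Real.rpow_pos_of_pos hd _
  have ha : (0:ℝ) < s ^ (2*H) := Real.rpow_pos_of_pos hs _
  set B : ℝ := (2:ℝ) ^ (2*H) with hB
  have hB4 : B < 4 := st7_B_lt_four hH
  have hB1 : 1 < B := st7_one_lt_B hH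
  have hmin : min (s ^ (2*H)) (t ^ (2*H)) = s ^ (2*H) :=
    min_eq_left (Real.rpow_le_rpow hs.le hst.le (by linarith [hH.1]))
  have hlb := st7_theta_lb hH hs hst
  have hidentity := st7_part_i H (ne_of_lt hst)
  rw [habs] at hidentity
  have hA : B * (4 - B) / 4 * s ^ (2*H) ≤ fbmA H s t := by
    rw [hidentity] at hlb
    have := (mul_le_mul_iff_right₀ hc).1 (by nlinarith [hlb] :
      (t - s) ^ (2*H) * (B * (4 - B) / 4 * s ^ (2*H)) ≤ (t - s) ^ (2*H) * fbmA H s t)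
    exact this
  have hBBpos : (0:ℝ) < B * (4 - B) := by nlinarith
  have hApos : 0 < fbmA H s t := lt_of_lt_of_le (by positivity) hA
  rw [hmin, abs_of_pos hApos]
  have hcon : (2:ℝ) ^ (2-2*H) / (4 - B) = 4 / (B * (4 - B)) := by
    rw [show (2:ℝ) - 2*H = 2 - 2*H from rfl, Real.rpow_sub two_pos, st7_two_rpow_two, ← hB,
      div_div]
  rw [hcon, div_le_div_iff₀ hApos hBBpos]
  nlinarith [hA, ha]

private lemma st7_bound_iii {H : ℝ} (hH : H ∈ Set.Ioo (0:ℝ) 1) {s t : ℝ}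
    (hs : 0 < s) (hst : s < t) :
    1 / (fbmTheta H s t)^2 ≤ (4 / ((2:ℝ) ^ (2*H) * (4 - (2:ℝ) ^ (2*H))))^2
      / (|t - s| ^ (4*H) * min (s ^ (4*H)) (t ^ (4*H))) := by
  have hd : (0:ℝ) < t - s := by linarith
  have habs : |t - s| = t - s := abs_of_pos hd
  have hc : (0:ℝ) < (t - s) ^ (2*H) := Real.rpow_pos_of_pos hd _
  have ha : (0:ℝ) < s ^ (2*H) := Real.rpow_pos_of_pos hs _
  set B : ℝ := (2:ℝ) ^ (2*H) with hB
  have hB4 : B < 4 := st7_B_lt_four hH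
  have hB1 : 1 < B := st7_one_lt_B hH
  have hL := st7_theta_lb hH hs hst
  set L : ℝ := B * (4 - B) / 4 * (s ^ (2*H) * (t - s) ^ (2*H)) with hLdef
  have hBBpos : (0:ℝ) < B * (4 - B) := by nlinarith
  have hLpos : 0 < L := by rw [hLdef]; positivity
  have hΘpos : 0 < fbmTheta H s t := lt_of_lt_of_le hLpos hL
  have h1 : 1 / (fbmTheta H s t)^2 ≤ 1 / L^2 := by
    apply one_div_le_one_div_of_le (by positivity)
    exact pow_le_pow_left₀ hLpos.le hL 2
  refine h1.trans (le_of_eq ?_)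
  have hmin : min (s ^ (4*H)) (t ^ (4*H)) = s ^ (4*H) :=
    min_eq_left (Real.rpow_le_rpow hs.le hst.le (by linarith [hH.1]))
  have e4s : s ^ (2*H) * s ^ (2*H) = s ^ (4*H) := by
    rw [← Real.rpow_add hs]; congr 1; ring
  have e4d : (t - s) ^ (2*H) * (t - s) ^ (2*H) = (t - s) ^ (4*H) := by
    rw [← Real.rpow_add hd]; congr 1; ring
  rw [habs, hmin, ← e4s, ← e4d, hLdef]
  have hBB : B * (4 - B) ≠ 0 := ne_of_gt hBBpos
  field_simp

private lemma st7_theta_comm (H s t : ℝ) : fbmTheta H s t = fbmTheta H t s := by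
  unfold fbmTheta fbmR
  rw [abs_sub_comm]
  ring

private lemma st7_A_comm (H s t : ℝ) : fbmA H s t = fbmA H t s := by
  unfold fbmA
  rw [abs_sub_comm]
  ring

/-- For `H ∈ (0,1)` and all `s,t > 0`, `s ≠ t`:
(i) `Θ_{s,t} = |t−s|^{2H} A(s,t)`;
(ii) `(s^{2H} ∧ t^{2H})/|A(s,t)| ≤ 2^{2−2H}/(4 − 2^{2H})`;
(iii) there is `C_H` with `1/Θ²_{s,t} ≤ C_H/(|t−s|^{4H}(s^{4H} ∧ t^{4H}))`. -/
theorem statement7 (H : ℝ) (hH : H ∈ Set.Ioo (0:ℝ) 1) :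
    (∀ s t : ℝ, 0 < s → 0 < t → s ≠ t →
      fbmTheta H s t = |t - s| ^ (2*H) * fbmA H s t ∧
      min (s ^ (2*H)) (t ^ (2*H)) / |fbmA H s t| ≤ (2:ℝ) ^ (2-2*H) / (4 - (2:ℝ) ^ (2*H))) ∧
    ∃ C : ℝ, 0 < C ∧ ∀ s t : ℝ, 0 < s → 0 < t → s ≠ t →
      1 / (fbmTheta H s t)^2 ≤ C / (|t - s| ^ (4*H) * min (s ^ (4*H)) (t ^ (4*H))) := by
  constructor
  · intro s t hs ht hst
    refine ⟨st7_part_i H hst, ?_⟩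
    rcases lt_or_gt_of_ne hst with h | h
    · exact st7_bound_ii hH hs h
    · rw [st7_A_comm, min_comm]
      exact st7_bound_ii hH ht h
  · refine ⟨(4 / ((2:ℝ) ^ (2*H) * (4 - (2:ℝ) ^ (2*H))))^2, ?_, ?_⟩
    · have hB4 := st7_B_lt_four hH
      have hB1 := st7_one_lt_B hH
      have : (0:ℝ) < (2:ℝ) ^ (2*H) * (4 - (2:ℝ) ^ (2*H)) := by nlinarith
      positivity
    · intro s t hs ht hst
      rcases lt_or_gt_of_ne hst with h | h
      · exact st7_bound_iii hH hs h
      · rw [st7_theta_comm, min_comm, abs_sub_comm]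
        exact st7_bound_iii hH ht h
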